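/- Let ℓ : ℕ → ℕ satisfy ℓ(n) ≥ 2 for all n ≥ 1, let X = ∏_{n ≥ 1} Fin(ℓ(n)), and for each n ≥ 1 let L_n be a nontrivial subgroup of the permutation group of Fin(ℓ(n)). Let H be a closed subgroup of the group of level-preserving homeomorphisms of X (with the topology of uniform convergence) such that for every n ≥ 1 the image H_n of H in the permutation group of V_n = Fin(ℓ(1)) × ⋯ × Fin(ℓ(n)) acts transitively on V_n and contains the iterated permutational wreath product ℒ_n = L_n ≀ ⋯ ≀ L_1. Then H contains a non-Hausdorff element. -/

import Mathlib

open UniformConvergence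

/-- The standard metric on the path space `∏ n, Fin (ℓ n)` of a spherically homogeneous
rooted tree, inducing the product topology. -/
noncomputable instance pathSpaceMetric (ℓ : ℕ → ℕ) : MetricSpace (∀ n, Fin (ℓ n)) :=
  PiNat.metricSpace

/-- `g` is level-preserving: for every `n`, the first `n` coordinates of `g x` depend
only on the first `n` coordinates of `x`. -/
def LevelPreserving {ℓ : ℕ → ℕ} (g : (∀ n, Fin (ℓ n)) → (∀ n, Fin (ℓ n))) : Prop :=
  ∀ n : ℕ, ∀ x y : ∀ n, Fin (ℓ n), (∀ i < n, x i = y i) → ∀ i < n, g x i = g y i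

/-- `g` is a non-Hausdorff element: it fixes a point `x`, is not the identity on any open
neighborhood of `x`, yet every open neighborhood of `x` contains a nonempty open subset
on which `g` is the identity. -/
def IsNonHausdorffElement {X : Type*} [TopologicalSpace X] (g : X → X) : Prop :=
  ∃ x : X, g x = x ∧
    (∀ W : Set X, IsOpen W → x ∈ W → ¬ Set.EqOn g id W) ∧
    (∀ W : Set X, IsOpen W → x ∈ W → ∃ O : Set X, IsOpen O ∧ O.Nonempty ∧ O ⊆ W ∧
      Set.EqOn g id O)

/-- The portrait of the candidate non-Hausdorff element: at level `m + 2`, apply the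
permutation `σ (m+2)` exactly when the path reads `a 0, …, a (m-1), b m, b (m+1)`. -/
noncomputable def nhTau (ℓ : ℕ → ℕ) (a b : ∀ k, Fin (ℓ k))
    (σ : ∀ k, Equiv.Perm (Fin (ℓ k))) :
    (k : ℕ) → ((∀ i, Fin (ℓ i)) → Equiv.Perm (Fin (ℓ k)))
  | 0 => fun _ => 1
  | 1 => fun _ => 1
  | (m+2) => fun v => by
      classical
      exact if (∀ i < m, v i = a i) ∧ v m = b m ∧ v (m+1) = b (m+1) then σ (m+2) else 1

/-- Agreement below level `n` bounds the distance by `(1/2)^n`. -/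
theorem nh_dist_le {ℓ : ℕ → ℕ} {x y : ∀ n, Fin (ℓ n)} {n : ℕ}
    (h : ∀ i < n, x i = y i) : dist x y ≤ (1 / 2 : ℝ) ^ n :=
  PiNat.mem_cylinder_iff_dist_le.1 (fun i hi => h i hi)

/-- Every open set contains, around each of its points, a cylinder. -/
theorem nh_exists_cylinder {ℓ : ℕ → ℕ} {W : Set (∀ n, Fin (ℓ n))} (hW : IsOpen W)
    {x : ∀ n, Fin (ℓ n)} (hx : x ∈ W) :
    ∃ n : ℕ, ∀ v, (∀ i < n, v i = x i) → v ∈ W := by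
  rcases Metric.isOpen_iff.1 hW x hx with ⟨ε, hε, hball⟩
  rcases exists_pow_lt_of_lt_one hε (by norm_num : (1/2 : ℝ) < 1) with ⟨n, hn⟩
  refine ⟨n + 1, fun v hv => hball ?_⟩
  rw [Metric.mem_ball]
  calc dist v x ≤ (1/2 : ℝ) ^ (n+1) := nh_dist_le hv
    _ < (1/2 : ℝ) ^ n := by
        apply pow_lt_pow_right_of_lt_one₀ <;> norm_num
    _ < ε := hn

/-- Let `H` be a closed subgroup of the group of level-preserving homeomorphisms of the
path space `X = ∏ n, Fin (ℓ n)` (closed for the topology of uniform convergence) whose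
image at each level `n` acts transitively on the level-`n` vertices and contains the
iterated permutational wreath product of nontrivial permutation groups `L_n ≀ ⋯ ≀ L_1`.
Then `H` contains a non-Hausdorff element. -/
theorem stmt13 (ℓ : ℕ → ℕ) (hl : ∀ n, 2 ≤ ℓ n)
    (L : ∀ k, Subgroup (Equiv.Perm (Fin (ℓ k)))) (hL : ∀ k, L k ≠ ⊥)
    (H : Set ((∀ n, Fin (ℓ n)) → (∀ n, Fin (ℓ n))))
    (haut : ∀ g ∈ H, IsHomeomorph g ∧ LevelPreserving g)
    (hone : id ∈ H)
    (hmul : ∀ g ∈ H, ∀ h ∈ H, g ∘ h ∈ H)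
    (hinv : ∀ g ∈ H, ∃ h ∈ H, g ∘ h = id ∧ h ∘ g = id)
    (hclosed : IsClosed
      ((fun g : (∀ n, Fin (ℓ n)) → (∀ n, Fin (ℓ n)) => UniformFun.ofFun g) '' H :
        Set ((∀ n, Fin (ℓ n)) →ᵤ (∀ n, Fin (ℓ n)))))
    (htrans : ∀ n : ℕ, ∀ v w : ∀ n, Fin (ℓ n), ∃ g ∈ H, ∀ k < n, g v k = w k)
    (hwreath : ∀ n : ℕ,
      ∀ τ : (k : ℕ) → ((∀ i, Fin (ℓ i)) → Equiv.Perm (Fin (ℓ k))),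
      (∀ k w, τ k w ∈ L k) →
      (∀ k, ∀ w w' : ∀ i, Fin (ℓ i), (∀ i < k, w i = w' i) → τ k w = τ k w') →
      ∃ g ∈ H, ∀ v : ∀ i, Fin (ℓ i), ∀ k < n, g v k = τ k v (v k)) :
    ∃ g ∈ H, IsNonHausdorffElement g := by
  classical
  -- choose nontrivial permutations σ k ∈ L k, moving p k
  have hσex : ∀ k, ∃ s : Equiv.Perm (Fin (ℓ k)), ∃ p, s ∈ L k ∧ s p ≠ p := by
    intro k
    obtain ⟨⟨s, hsL⟩, hs1⟩ := Subgroup.ne_bot_iff_exists_ne_one.1 (hL k)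
    have hs1' : s ≠ 1 := by
      simpa [Subtype.ext_iff] using hs1
    have : ∃ p, s p ≠ p := by
      by_contra h
      push_neg at h
      exact hs1' (Equiv.ext fun p => h p)
    obtain ⟨p, hp⟩ := this
    exact ⟨s, p, hsL, hp⟩
  choose σ p hσL hp using hσex
  have h0 : ∀ k, 0 < ℓ k := fun k => lt_of_lt_of_le two_pos (hl k)
  have h1 : ∀ k, 1 < ℓ k := fun k => lt_of_lt_of_le one_lt_two (hl k)
  set a : ∀ k, Fin (ℓ k) := fun k => ⟨0, h0 k⟩ with ha
  set b : ∀ k, Fin (ℓ k) := fun k => ⟨1, h1 k⟩ with hb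
  have hab : ∀ k, a k ≠ b k := fun k => by simp [ha, hb, Fin.ext_iff]
  set τ := nhTau ℓ a b σ with hτ
  have hτmem : ∀ k w, τ k w ∈ L k := by
    intro k w
    match k with
    | 0 => exact (L 0).one_mem
    | 1 => exact (L 1).one_mem
    | (m+2) =>
      simp only [hτ, nhTau]
      split
      · exact hσL (m+2)
      · exact (L (m+2)).one_mem
  have hτlevel : ∀ k, ∀ w w' : ∀ i, Fin (ℓ i), (∀ i < k, w i = w' i) → τ k w = τ k w' := by
    intro k w w' hww
    match k with
    | 0 => rfl
    | 1 => rfl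
    | (m+2) =>
      simp only [hτ, nhTau]
      refine if_congr ?_ rfl rfl
      constructor
      · rintro ⟨h1, h2, h3⟩
        exact ⟨fun i hi => (hww i (by omega)).symm.trans (h1 i hi),
          (hww m (by omega)).symm.trans h2, (hww (m+1) (by omega)).symm.trans h3⟩
      · rintro ⟨h1, h2, h3⟩
        exact ⟨fun i hi => (hww i (by omega)).trans (h1 i hi),
          (hww m (by omega)).trans h2, (hww (m+1) (by omega)).trans h3⟩
  set g : (∀ n, Fin (ℓ n)) → (∀ n, Fin (ℓ n)) := fun v k => τ k v (v k) with hg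
  -- g is the uniform limit of elements of H, hence in H
  choose G hGH hGeq using fun n => hwreath n τ hτmem hτlevel
  have htend : Filter.Tendsto (fun n => UniformFun.ofFun (G n)) Filter.atTop
      (nhds (UniformFun.ofFun g)) := by
    rw [UniformFun.tendsto_iff_tendstoUniformly]
    rw [Metric.tendstoUniformly_iff]
    intro ε hε
    obtain ⟨N, hN⟩ := exists_pow_lt_of_lt_one hε (by norm_num : (1/2 : ℝ) < 1)
    filter_upwards [Filter.eventually_ge_atTop N] with n hn x
    calc dist (UniformFun.ofFun g x) (UniformFun.ofFun (G n) x) ≤ (1/2 : ℝ) ^ n :=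
          nh_dist_le (fun i hi => (hGeq n x i hi).symm)
      _ ≤ (1/2 : ℝ) ^ N := pow_le_pow_of_le_one (by norm_num) (by norm_num) hn
      _ < ε := hN
  have hmem : UniformFun.ofFun g ∈
      ((fun h : (∀ n, Fin (ℓ n)) → (∀ n, Fin (ℓ n)) => UniformFun.ofFun h) '' H) :=
    hclosed.mem_of_tendsto htend (Filter.Eventually.of_forall fun n => ⟨G n, hGH n, rfl⟩)
  obtain ⟨g0, hg0H, hg0⟩ := hmem
  have hgg : g0 = g := UniformFun.ofFun.injective hg0
  refine ⟨g, hgg ▸ hg0H, a, ?_, ?_, ?_⟩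
  · -- g fixes a
    funext k
    match k with
    | 0 => rfl
    | 1 => rfl
    | (m+2) =>
      show τ (m+2) a (a (m+2)) = a (m+2)
      simp only [hτ, nhTau]
      rw [if_neg]
      · rfl
      · rintro ⟨-, h2, -⟩
        exact hab m h2
  · -- g is not the identity near a
    intro W hW haW hEq
    obtain ⟨n, hn⟩ := nh_exists_cylinder hW haW
    set v : ∀ i, Fin (ℓ i) :=
      Function.update (Function.update (Function.update a n (b n)) (n+1) (b (n+1)))
        (n+2) (p (n+2)) with hv
    have hvlt : ∀ i < n, v i = a i := by
      intro i hi
      rw [hv, Function.update_of_ne (by omega), Function.update_of_ne (by omega),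
        Function.update_of_ne (by omega)]
    have hvn : v n = b n := by
      rw [hv, Function.update_of_ne (by omega), Function.update_of_ne (by omega),
        Function.update_self]
    have hvn1 : v (n+1) = b (n+1) := by
      rw [hv, Function.update_of_ne (by omega), Function.update_self]
    have hvn2 : v (n+2) = p (n+2) := by rw [hv, Function.update_self]
    have hvW : v ∈ W := hn v hvlt
    have hτv : τ (n+2) v = σ (n+2) := by
      show nhTau ℓ a b σ (n+2) v = σ (n+2)
      simp only [nhTau]
      exact if_pos ⟨hvlt, hvn, hvn1⟩
    have hEqv : τ (n+2) v (v (n+2)) = v (n+2) := congrFun (hEq hvW) (n + 2)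
    rw [hτv, hvn2] at hEqv
    exact hp (n+2) hEqv
  · -- every neighborhood of a contains a cylinder on which g is the identity
    intro W hW haW
    obtain ⟨n, hn⟩ := nh_exists_cylinder hW haW
    set w : ∀ i, Fin (ℓ i) := Function.update a n (b n) with hw
    have hwlt : ∀ i, i ≠ n → w i = a i := fun i hi => by
      rw [hw, Function.update_of_ne hi]
    have hwn : w n = b n := by rw [hw, Function.update_self]
    refine ⟨{v | ∀ i < n + 2, v i = w i}, ?_, ⟨w, fun i _ => rfl⟩, ?_, ?_⟩
    · rw [Metric.isOpen_iff]
      intro v hv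
      refine ⟨(1/2 : ℝ) ^ (n+2), by positivity, fun y hy => ?_⟩
      intro i hi
      rw [Metric.mem_ball] at hy
      exact (PiNat.apply_eq_of_dist_lt hy (le_of_lt hi)).trans (hv i hi)
    · intro v hv
      refine hn v (fun i hi => ?_)
      exact (hv i (by omega)).trans (hwlt i (by omega))
    · intro v hv
      have hvn : v n = b n := (hv n (by omega)).trans hwn
      have hvn1 : v (n+1) = a (n+1) := (hv (n+1) (by omega)).trans (hwlt (n+1) (by omega))
      funext k
      rw [id]
      match k with
      | 0 => rfl
      | 1 => rfl
      | (m+2) =>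
        show τ (m+2) v (v (m+2)) = v (m+2)
        simp only [hτ, nhTau]
        rw [if_neg]
        · rfl
        · rintro ⟨h1, h2, h3⟩
          rcases lt_trichotomy m n with hmn | rfl | hmn
          · have hvm : v m = a m := (hv m (by omega)).trans (hwlt m (by omega))
            exact hab m (hvm.symm.trans h2)
          · exact hab (m+1) (hvn1.symm.trans h3)
          · exact hab n ((h1 n hmn).symm.trans hvn)
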